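/- In the quotient module T^1 = (O f_1* ⊕ O f_2*) / ⟨ z f_1* + y f_2*, z f_1* + x f_2*, (3z^2 + x + y) f_1* ⟩, where O = C[x,y,z]/((x+y+z^2)z, xy), the classes of f_1*, x f_1*, y f_1*, z f_1*, f_2*, z f_2*, z^2 f_2* form a basis; in particular T^1 is a 7-dimensional complex vector space. -/

import Mathlib

open MvPolynomial

set_option maxHeartbeats 1000000
set_option synthInstance.maxHeartbeats 200000

noncomputable section

/-- The ideal `I = ((x + y + z²)z, xy)` of the space curve singularity. -/
def Ising : Ideal (MvPolynomial (Fin 3) ℂ) :=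
  Ideal.span {(X 0 + X 1 + X 2 ^ 2) * X 2, X 0 * X 1}

/-- The local ring `O = ℂ[x,y,z]/((x+y+z²)z, xy)`. -/
abbrev Osing := MvPolynomial (Fin 3) ℂ ⧸ Ising

def xb : Osing := Ideal.Quotient.mk Ising (X 0)
def yb : Osing := Ideal.Quotient.mk Ising (X 1)
def zb : Osing := Ideal.Quotient.mk Ising (X 2)

/-- The submodule of relations `⟨z f₁* + y f₂*, z f₁* + x f₂*, (3z² + x + y) f₁*⟩`
inside the free module `O f₁* ⊕ O f₂*`. -/
def Nrel : Submodule Osing (Osing × Osing) :=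
  Submodule.span Osing {(zb, yb), (zb, xb), (3 * zb ^ 2 + xb + yb, 0)}

/-- The versal deformation space `T¹ = (O f₁* ⊕ O f₂*)/N`. -/
abbrev T1 := (Osing × Osing) ⧸ Nrel

/-- The classes of `f₁*, x f₁*, y f₁*, z f₁*, f₂*, z f₂*, z² f₂*` in `T¹`. -/
def T1basis : Fin 7 → T1 :=
  ![Submodule.Quotient.mk (1, 0), Submodule.Quotient.mk (xb, 0),
    Submodule.Quotient.mk (yb, 0), Submodule.Quotient.mk (zb, 0),
    Submodule.Quotient.mk (0, 1), Submodule.Quotient.mk (0, zb),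
    Submodule.Quotient.mk (0, zb ^ 2)]

-- the model

@[simp] lemma cons_val_five {α : Type*} {m : ℕ} (x : α) (u : Fin (m+5) → α) :
    Matrix.vecCons x u 5 =
      Matrix.vecHead (Matrix.vecTail (Matrix.vecTail (Matrix.vecTail (Matrix.vecTail u)))) := rfl
@[simp] lemma cons_val_six {α : Type*} {m : ℕ} (x : α) (u : Fin (m+6) → α) :
    Matrix.vecCons x u 6 =
      Matrix.vecHead (Matrix.vecTail (Matrix.vecTail (Matrix.vecTail (Matrix.vecTail (Matrix.vecTail u))))) := rfl


abbrev MM := Fin 7 → ℂ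

def Lx : MM →ₗ[ℂ] MM where
  toFun m := ![0, m 0 + (1/3) * m 5, (1/3) * m 5, -(m 4), 0, 0, 0]
  map_add' a b := by funext i; fin_cases i <;> simp <;> ring
  map_smul' c a := by funext i; fin_cases i <;> simp <;> ring

def Ly : MM →ₗ[ℂ] MM where
  toFun m := ![0, (1/3) * m 5, m 0 + (1/3) * m 5, -(m 4), 0, 0, 0]
  map_add' a b := by funext i; fin_cases i <;> simp <;> ring
  map_smul' c a := by funext i; fin_cases i <;> simp <;> ring

def Lz : MM →ₗ[ℂ] MM where
  toFun m := ![0, -(1/3) * m 3 - (2/3) * m 6, -(1/3) * m 3 - (2/3) * m 6, m 0, 0, m 4, m 5]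
  map_add' a b := by funext i; fin_cases i <;> simp <;> ring
  map_smul' c a := by funext i; fin_cases i <;> simp <;> ring

lemma comm_xy : Lx * Ly = Ly * Lx := by
  apply LinearMap.ext; intro m; funext i
  fin_cases i <;> simp [Lx, Ly, Module.End.mul_apply]

lemma comm_xz : Lx * Lz = Lz * Lx := by
  apply LinearMap.ext; intro m; funext i
  fin_cases i <;> simp [Lx, Lz, Module.End.mul_apply] <;> ring

lemma comm_yz : Ly * Lz = Lz * Ly := by
  apply LinearMap.ext; intro m; funext i
  fin_cases i <;> simp [Ly, Lz, Module.End.mul_apply] <;> ring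

lemma rel1 : (Lx + Ly + Lz ^ 2) * Lz = 0 := by
  apply LinearMap.ext; intro m; funext i
  fin_cases i <;> simp [Lx, Ly, Lz, Module.End.mul_apply, pow_two] <;> ring

lemma rel2 : Lx * Ly = 0 := by
  apply LinearMap.ext; intro m; funext i
  fin_cases i <;> simp [Lx, Ly, Module.End.mul_apply]

lemma hcomm : ∀ a ∈ ({Lx, Ly, Lz} : Set (Module.End ℂ MM)), ∀ b ∈ ({Lx, Ly, Lz} : Set (Module.End ℂ MM)),
    a * b = b * a := by
  rintro a (rfl|rfl|rfl) b (rfl|rfl|rfl) <;>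
    first
      | rfl
      | exact comm_xy | exact comm_xy.symm
      | exact comm_xz | exact comm_xz.symm
      | exact comm_yz | exact comm_yz.symm

def Asub : Subalgebra ℂ (Module.End ℂ MM) := Algebra.adjoin ℂ {Lx, Ly, Lz}

instance : CommRing Asub :=
  { (inferInstance : Ring Asub) with mul_comm := (Algebra.isMulCommutative_adjoin ℂ hcomm).is_comm.comm }

def vA : Fin 3 → Asub :=
  ![⟨Lx, Algebra.subset_adjoin (by simp)⟩, ⟨Ly, Algebra.subset_adjoin (by simp)⟩,
    ⟨Lz, Algebra.subset_adjoin (by simp)⟩]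

def ρ : MvPolynomial (Fin 3) ℂ →ₐ[ℂ] Asub := aeval vA

lemma ρ_vanish : ∀ a ∈ Ising, ρ a = 0 := by
  intro a ha
  have hle : Ising ≤ RingHom.ker ρ.toRingHom := by
    rw [Ising, Ideal.span_le]
    rintro p (rfl|rfl) <;> rw [SetLike.mem_coe, RingHom.mem_ker]
    · apply Subtype.ext
      have h1 : ρ.toRingHom ((X 0 + X 1 + X 2 ^ 2) * X 2) = (vA 0 + vA 1 + vA 2 ^ 2) * vA 2 := by
        simp [ρ]
      rw [h1]
      have h2 : (((vA 0 + vA 1 + vA 2 ^ 2) * vA 2 : Asub) : Module.End ℂ MM)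
          = (Lx + Ly + Lz ^ 2) * Lz := by
        push_cast
        norm_num [vA]
        rfl
      rw [h2, rel1]
      rfl
    · apply Subtype.ext
      have h1 : ρ.toRingHom (X 0 * X 1) = vA 0 * vA 1 := by simp [ρ]
      rw [h1]
      have h2 : (((vA 0 * vA 1) : Asub) : Module.End ℂ MM) = Lx * Ly := by
        push_cast
        norm_num [vA]
      rw [h2, rel2]
      rfl
  exact hle ha

def gA : Osing →+* Asub := Ideal.Quotient.lift Ising ρ.toRingHom (by exact ρ_vanish)

def gE : Osing →+* Module.End ℂ MM := (Asub.val : Asub →ₐ[ℂ] Module.End ℂ MM).toRingHom.comp gA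

instance : Module Osing MM := Module.compHom MM gE

lemma osmul_def (o : Osing) (m : MM) : o • m = gE o m := rfl

lemma mk_smul (p : MvPolynomial (Fin 3) ℂ) (m : MM) :
    (Ideal.Quotient.mk Ising p) • m = ((aeval vA p : Asub) : Module.End ℂ MM) m := by
  rw [osmul_def]
  simp [gE, gA, Ideal.Quotient.lift_mk, ρ]

lemma xb_smul (m : MM) : xb • m = Lx m := by rw [xb, mk_smul]; simp [vA]
lemma yb_smul (m : MM) : yb • m = Ly m := by rw [yb, mk_smul]; simp [vA]
lemma zb_smul (m : MM) : zb • m = Lz m := by rw [zb, mk_smul]; simp [vA]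

instance : IsScalarTower ℂ Osing MM := by
  constructor
  intro c o m
  obtain ⟨p, rfl⟩ := Ideal.Quotient.mk_surjective (I := Ising) o
  have hc : c • (Ideal.Quotient.mk Ising p) = Ideal.Quotient.mk Ising (c • p) := by
    rw [show (Ideal.Quotient.mk Ising : MvPolynomial (Fin 3) ℂ → Osing)
          = ⇑(Ideal.Quotient.mkₐ ℂ Ising) from (Ideal.Quotient.mkₐ_eq_mk ℂ Ising).symm,
        ← map_smul]
  rw [hc, mk_smul, mk_smul, map_smul]
  simp

def Phi : (Osing × Osing) →ₗ[Osing] MM :=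
  LinearMap.coprod (LinearMap.toSpanSingleton Osing MM (Pi.single 0 1))
    (LinearMap.toSpanSingleton Osing MM (Pi.single 4 1))

lemma Phi_apply (a b : Osing) : Phi (a, b) = a • (Pi.single 0 1 : MM) + b • (Pi.single 4 1 : MM) := rfl

lemma smul3 (v : MM) : ((3 : Osing)) • v = (3 : ℂ) • v := by
  rw [show ((3 : Osing)) = algebraMap ℂ Osing 3 by rw [map_ofNat], algebraMap_smul]

lemma Nrel_le_ker : Nrel ≤ LinearMap.ker Phi := by
  rw [Nrel, Submodule.span_le]
  rintro v (rfl|rfl|rfl) <;> rw [SetLike.mem_coe, LinearMap.mem_ker, Phi_apply]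
  · rw [zb_smul, yb_smul]
    funext i; fin_cases i <;> simp [Lz, Ly, Pi.single_apply]
  · rw [zb_smul, xb_smul]
    funext i; fin_cases i <;> simp [Lz, Lx, Pi.single_apply]
  · rw [Module.zero_smul, add_zero, add_smul, add_smul, xb_smul, yb_smul, mul_smul, pow_two, mul_smul,
      zb_smul, zb_smul, smul3]
    funext i; fin_cases i <;> simp [Lz, Lx, Ly, Pi.single_apply] <;> ring

def Phibar : T1 →ₗ[Osing] MM := Nrel.liftQ Phi Nrel_le_ker

lemma pb0 : Phibar (Submodule.Quotient.mk ((1 : Osing), (0 : Osing))) = Pi.single (0 : Fin 7) 1 := by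
  rw [Phibar, Submodule.liftQ_apply, Phi_apply, one_smul, Module.zero_smul, add_zero]

lemma pb1 : Phibar (Submodule.Quotient.mk (xb, (0 : Osing))) = Pi.single (1 : Fin 7) 1 := by
  rw [Phibar, Submodule.liftQ_apply, Phi_apply, Module.zero_smul, add_zero, xb_smul]
  funext i; fin_cases i <;> simp [Lx, Pi.single_apply]

lemma pb2 : Phibar (Submodule.Quotient.mk (yb, (0 : Osing))) = Pi.single (2 : Fin 7) 1 := by
  rw [Phibar, Submodule.liftQ_apply, Phi_apply, Module.zero_smul, add_zero, yb_smul]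
  funext i; fin_cases i <;> simp [Ly, Pi.single_apply]

lemma pb3 : Phibar (Submodule.Quotient.mk (zb, (0 : Osing))) = Pi.single (3 : Fin 7) 1 := by
  rw [Phibar, Submodule.liftQ_apply, Phi_apply, Module.zero_smul, add_zero, zb_smul]
  funext i; fin_cases i <;> simp [Lz, Pi.single_apply]

lemma pb4 : Phibar (Submodule.Quotient.mk ((0 : Osing), (1 : Osing))) = Pi.single (4 : Fin 7) 1 := by
  rw [Phibar, Submodule.liftQ_apply, Phi_apply, one_smul, Module.zero_smul, zero_add]

lemma pb5 : Phibar (Submodule.Quotient.mk ((0 : Osing), zb)) = Pi.single (5 : Fin 7) 1 := by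
  rw [Phibar, Submodule.liftQ_apply, Phi_apply, Module.zero_smul, zero_add, zb_smul]
  funext i; fin_cases i <;> simp [Lz, Pi.single_apply]

lemma pb6 : Phibar (Submodule.Quotient.mk ((0 : Osing), zb ^ 2)) = Pi.single (6 : Fin 7) 1 := by
  rw [Phibar, Submodule.liftQ_apply, Phi_apply, Module.zero_smul, zero_add, pow_two, mul_smul,
    zb_smul, zb_smul]
  funext i; fin_cases i <;> simp [Lz, Pi.single_apply]

lemma Phibar_comp : ∀ i : Fin 7, Phibar (T1basis i) = Pi.single i 1 := by
  intro i
  fin_cases i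
  · exact pb0
  · exact pb1
  · exact pb2
  · exact pb3
  · exact pb4
  · exact pb5
  · exact pb6

lemma T1_linearIndependent : LinearIndependent ℂ T1basis := by
  have h := (Pi.basisFun ℂ (Fin 7)).linearIndependent
  have heq : (⇑(Phibar.restrictScalars ℂ) ∘ T1basis) = ⇑(Pi.basisFun ℂ (Fin 7)) := by
    funext i
    simp [Phibar_comp i, Pi.basisFun_apply]
  exact LinearIndependent.of_comp (Phibar.restrictScalars ℂ) (heq ▸ h)

-- ### Spanning

def SS : Submodule ℂ T1 := Submodule.span ℂ (Set.range T1basis)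

lemma memS (j : Fin 7) : T1basis j ∈ SS := Submodule.subset_span ⟨j, rfl⟩

lemma hxy : xb * yb = 0 := by
  rw [xb, yb, ← map_mul, Ideal.Quotient.eq_zero_iff_mem]
  exact Ideal.subset_span (by simp)

lemma hz : xb * zb + yb * zb + zb ^ 3 = 0 := by
  have h : xb * zb + yb * zb + zb ^ 3
      = Ideal.Quotient.mk Ising ((X 0 + X 1 + X 2 ^ 2) * X 2) := by
    rw [xb, yb, zb]
    rw [← map_mul, ← map_mul, ← map_pow, ← map_add, ← map_add]
    congr 1
    ring
  rw [h, Ideal.Quotient.eq_zero_iff_mem]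
  exact Ideal.subset_span (by simp)

lemma combo_mem (a b c : Osing) :
    a • ((zb, yb) : Osing × Osing) + b • ((zb, xb) : Osing × Osing)
      + c • ((3 * zb ^ 2 + xb + yb, 0) : Osing × Osing) ∈ Nrel := by
  refine Submodule.add_mem _ (Submodule.add_mem _ ?_ ?_) ?_ <;>
    refine Submodule.smul_mem _ _ (Submodule.subset_span ?_) <;> simp

lemma mk_mem_SS_of (w u : Osing × Osing) (hu : (Submodule.Quotient.mk u : T1) ∈ SS)
    (h : w - u ∈ Nrel) : (Submodule.Quotient.mk w : T1) ∈ SS := by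
  rwa [show (Submodule.Quotient.mk w : T1) = Submodule.Quotient.mk u from
    (Submodule.Quotient.eq Nrel).mpr h]

lemma hsm3 (w : Osing × Osing) :
    (3 : ℂ) • (Submodule.Quotient.mk w : T1) = Submodule.Quotient.mk ((3 : Osing) • w) := by
  rw [← algebraMap_smul Osing (3 : ℂ) (Submodule.Quotient.mk w : T1),
    ← Submodule.Quotient.mk_smul, map_ofNat]

lemma mem_of_three_smul (t : T1) (h : (3 : ℂ) • t ∈ SS) : t ∈ SS := by
  have h2 := SS.smul_mem ((3 : ℂ)⁻¹) h
  rwa [smul_smul, inv_mul_cancel₀ (by norm_num), one_smul] at h2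

lemma SS_closed {r : Osing} (hbase : ∀ j : Fin 7, r • T1basis j ∈ SS) :
    ∀ t ∈ SS, r • t ∈ SS := by
  intro t ht
  induction ht using Submodule.span_induction with
  | mem v hv => obtain ⟨j, rfl⟩ := hv; exact hbase j
  | zero => rw [smul_zero]; exact SS.zero_mem
  | add a b _ _ ha hb => rw [smul_add]; exact SS.add_mem ha hb
  | smul c a _ ha =>
    rw [← algebraMap_smul Osing c a, smul_smul, mul_comm, ← smul_smul, algebraMap_smul]
    exact SS.smul_mem _ ha

lemma SS_x : ∀ t ∈ SS, xb • t ∈ SS := by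
  refine SS_closed ?_
  intro j
  fin_cases j
  · show xb • (Submodule.Quotient.mk ((1 : Osing), (0 : Osing)) : T1) ∈ SS
    rw [← Submodule.Quotient.mk_smul, Prod.smul_mk, smul_eq_mul, smul_eq_mul, mul_one, mul_zero]
    exact memS 1
  · show xb • (Submodule.Quotient.mk (xb, (0 : Osing)) : T1) ∈ SS
    rw [← Submodule.Quotient.mk_smul]
    refine mk_mem_SS_of _ 0 (by rw [Submodule.Quotient.mk_zero]; exact SS.zero_mem) ?_
    have h : xb • ((xb, (0 : Osing)) : Osing × Osing) - 0
        = (-(3 * (xb * zb))) • ((zb, yb) : Osing × Osing) + (0 : Osing) • ((zb, xb) : Osing × Osing)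
          + xb • ((3 * zb ^ 2 + xb + yb, 0) : Osing × Osing) := by
      rw [Prod.ext_iff]
      constructor
      · simp [Prod.smul_mk, smul_eq_mul]; linear_combination -hxy
      · simp [Prod.smul_mk, smul_eq_mul]; linear_combination (3 * zb) * hxy
    rw [h]; exact combo_mem _ _ _
  · show xb • (Submodule.Quotient.mk (yb, (0 : Osing)) : T1) ∈ SS
    rw [← Submodule.Quotient.mk_smul]
    have h : xb • ((yb, (0 : Osing)) : Osing × Osing) = 0 := by
      rw [Prod.ext_iff]
      constructor <;> simp [Prod.smul_mk, smul_eq_mul, hxy]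
    rw [h, Submodule.Quotient.mk_zero]; exact SS.zero_mem
  · show xb • (Submodule.Quotient.mk (zb, (0 : Osing)) : T1) ∈ SS
    rw [← Submodule.Quotient.mk_smul]
    refine mk_mem_SS_of _ 0 (by rw [Submodule.Quotient.mk_zero]; exact SS.zero_mem) ?_
    have h : xb • ((zb, (0 : Osing)) : Osing × Osing) - 0
        = xb • ((zb, yb) : Osing × Osing) + (0 : Osing) • ((zb, xb) : Osing × Osing)
          + (0 : Osing) • ((3 * zb ^ 2 + xb + yb, 0) : Osing × Osing) := by
      rw [Prod.ext_iff]
      constructor <;> simp [Prod.smul_mk, smul_eq_mul] <;> linear_combination -hxy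
    rw [h]; exact combo_mem _ _ _
  · show xb • (Submodule.Quotient.mk ((0 : Osing), (1 : Osing)) : T1) ∈ SS
    rw [← Submodule.Quotient.mk_smul]
    refine mk_mem_SS_of _ (-(zb, (0 : Osing)))
      (by rw [Submodule.Quotient.mk_neg]; exact SS.neg_mem (memS 3)) ?_
    have h : xb • (((0 : Osing), (1 : Osing)) : Osing × Osing) - (-(zb, (0 : Osing)))
        = (0 : Osing) • ((zb, yb) : Osing × Osing) + (1 : Osing) • ((zb, xb) : Osing × Osing)
          + (0 : Osing) • ((3 * zb ^ 2 + xb + yb, 0) : Osing × Osing) := by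
      rw [Prod.ext_iff]
      constructor <;> simp [Prod.smul_mk, smul_eq_mul]
    rw [h]; exact combo_mem _ _ _
  · show xb • (Submodule.Quotient.mk ((0 : Osing), zb) : T1) ∈ SS
    rw [← Submodule.Quotient.mk_smul]
    apply mem_of_three_smul
    rw [hsm3]
    refine mk_mem_SS_of _ ((xb, 0) + (yb, 0))
      (by rw [Submodule.Quotient.mk_add]; exact SS.add_mem (memS 1) (memS 2)) ?_
    have h : (3 : Osing) • (xb • (((0 : Osing), zb) : Osing × Osing)) - ((xb, 0) + (yb, 0))
        = (0 : Osing) • ((zb, yb) : Osing × Osing) + (3 * zb) • ((zb, xb) : Osing × Osing)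
          + (-1 : Osing) • ((3 * zb ^ 2 + xb + yb, 0) : Osing × Osing) := by
      rw [Prod.ext_iff]
      constructor <;> simp [Prod.smul_mk, smul_eq_mul] <;> ring
    rw [h]; exact combo_mem _ _ _
  · show xb • (Submodule.Quotient.mk ((0 : Osing), zb ^ 2) : T1) ∈ SS
    rw [← Submodule.Quotient.mk_smul]
    refine mk_mem_SS_of _ 0 (by rw [Submodule.Quotient.mk_zero]; exact SS.zero_mem) ?_
    have h : xb • (((0 : Osing), zb ^ 2) : Osing × Osing) - 0
        = xb • ((zb, yb) : Osing × Osing) + (yb + zb ^ 2) • ((zb, xb) : Osing × Osing)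
          + (0 : Osing) • ((3 * zb ^ 2 + xb + yb, 0) : Osing × Osing) := by
      rw [Prod.ext_iff]
      constructor
      · simp [Prod.smul_mk, smul_eq_mul]; linear_combination -hz
      · simp [Prod.smul_mk, smul_eq_mul]; linear_combination -2 * hxy
    rw [h]; exact combo_mem _ _ _

lemma SS_y : ∀ t ∈ SS, yb • t ∈ SS := by
  refine SS_closed ?_
  intro j
  fin_cases j
  · show yb • (Submodule.Quotient.mk ((1 : Osing), (0 : Osing)) : T1) ∈ SS
    rw [← Submodule.Quotient.mk_smul, Prod.smul_mk, smul_eq_mul, smul_eq_mul, mul_one, mul_zero]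
    exact memS 2
  · show yb • (Submodule.Quotient.mk (xb, (0 : Osing)) : T1) ∈ SS
    rw [← Submodule.Quotient.mk_smul]
    have h : yb • ((xb, (0 : Osing)) : Osing × Osing) = 0 := by
      rw [Prod.ext_iff]
      constructor <;> simp [Prod.smul_mk, smul_eq_mul]
      linear_combination hxy
    rw [h, Submodule.Quotient.mk_zero]; exact SS.zero_mem
  · show yb • (Submodule.Quotient.mk (yb, (0 : Osing)) : T1) ∈ SS
    rw [← Submodule.Quotient.mk_smul]
    refine mk_mem_SS_of _ 0 (by rw [Submodule.Quotient.mk_zero]; exact SS.zero_mem) ?_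
    have h : yb • ((yb, (0 : Osing)) : Osing × Osing) - 0
        = (0 : Osing) • ((zb, yb) : Osing × Osing) + (-(3 * (yb * zb))) • ((zb, xb) : Osing × Osing)
          + yb • ((3 * zb ^ 2 + xb + yb, 0) : Osing × Osing) := by
      rw [Prod.ext_iff]
      constructor
      · simp [Prod.smul_mk, smul_eq_mul]; linear_combination -hxy
      · simp [Prod.smul_mk, smul_eq_mul]; linear_combination (3 * zb) * hxy
    rw [h]; exact combo_mem _ _ _
  · show yb • (Submodule.Quotient.mk (zb, (0 : Osing)) : T1) ∈ SS
    rw [← Submodule.Quotient.mk_smul]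
    refine mk_mem_SS_of _ 0 (by rw [Submodule.Quotient.mk_zero]; exact SS.zero_mem) ?_
    have h : yb • ((zb, (0 : Osing)) : Osing × Osing) - 0
        = (0 : Osing) • ((zb, yb) : Osing × Osing) + yb • ((zb, xb) : Osing × Osing)
          + (0 : Osing) • ((3 * zb ^ 2 + xb + yb, 0) : Osing × Osing) := by
      rw [Prod.ext_iff]
      constructor <;> simp [Prod.smul_mk, smul_eq_mul] <;> linear_combination -hxy
    rw [h]; exact combo_mem _ _ _
  · show yb • (Submodule.Quotient.mk ((0 : Osing), (1 : Osing)) : T1) ∈ SS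
    rw [← Submodule.Quotient.mk_smul]
    refine mk_mem_SS_of _ (-(zb, (0 : Osing)))
      (by rw [Submodule.Quotient.mk_neg]; exact SS.neg_mem (memS 3)) ?_
    have h : yb • (((0 : Osing), (1 : Osing)) : Osing × Osing) - (-(zb, (0 : Osing)))
        = (1 : Osing) • ((zb, yb) : Osing × Osing) + (0 : Osing) • ((zb, xb) : Osing × Osing)
          + (0 : Osing) • ((3 * zb ^ 2 + xb + yb, 0) : Osing × Osing) := by
      rw [Prod.ext_iff]
      constructor <;> simp [Prod.smul_mk, smul_eq_mul]
    rw [h]; exact combo_mem _ _ _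
  · show yb • (Submodule.Quotient.mk ((0 : Osing), zb) : T1) ∈ SS
    rw [← Submodule.Quotient.mk_smul]
    apply mem_of_three_smul
    rw [hsm3]
    refine mk_mem_SS_of _ ((xb, 0) + (yb, 0))
      (by rw [Submodule.Quotient.mk_add]; exact SS.add_mem (memS 1) (memS 2)) ?_
    have h : (3 : Osing) • (yb • (((0 : Osing), zb) : Osing × Osing)) - ((xb, 0) + (yb, 0))
        = (3 * zb) • ((zb, yb) : Osing × Osing) + (0 : Osing) • ((zb, xb) : Osing × Osing)
          + (-1 : Osing) • ((3 * zb ^ 2 + xb + yb, 0) : Osing × Osing) := by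
      rw [Prod.ext_iff]
      constructor <;> simp [Prod.smul_mk, smul_eq_mul] <;> ring
    rw [h]; exact combo_mem _ _ _
  · show yb • (Submodule.Quotient.mk ((0 : Osing), zb ^ 2) : T1) ∈ SS
    rw [← Submodule.Quotient.mk_smul]
    refine mk_mem_SS_of _ 0 (by rw [Submodule.Quotient.mk_zero]; exact SS.zero_mem) ?_
    have h : yb • (((0 : Osing), zb ^ 2) : Osing × Osing) - 0
        = (xb + zb ^ 2) • ((zb, yb) : Osing × Osing) + yb • ((zb, xb) : Osing × Osing)
          + (0 : Osing) • ((3 * zb ^ 2 + xb + yb, 0) : Osing × Osing) := by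
      rw [Prod.ext_iff]
      constructor
      · simp [Prod.smul_mk, smul_eq_mul]; linear_combination -hz
      · simp [Prod.smul_mk, smul_eq_mul]; linear_combination -2 * hxy
    rw [h]; exact combo_mem _ _ _

lemma SS_z : ∀ t ∈ SS, zb • t ∈ SS := by
  refine SS_closed ?_
  intro j
  fin_cases j
  · show zb • (Submodule.Quotient.mk ((1 : Osing), (0 : Osing)) : T1) ∈ SS
    rw [← Submodule.Quotient.mk_smul, Prod.smul_mk, smul_eq_mul, smul_eq_mul, mul_one, mul_zero]
    exact memS 3
  · show zb • (Submodule.Quotient.mk (xb, (0 : Osing)) : T1) ∈ SS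
    rw [← Submodule.Quotient.mk_smul]
    refine mk_mem_SS_of _ 0 (by rw [Submodule.Quotient.mk_zero]; exact SS.zero_mem) ?_
    have h : zb • ((xb, (0 : Osing)) : Osing × Osing) - 0
        = xb • ((zb, yb) : Osing × Osing) + (0 : Osing) • ((zb, xb) : Osing × Osing)
          + (0 : Osing) • ((3 * zb ^ 2 + xb + yb, 0) : Osing × Osing) := by
      rw [Prod.ext_iff]
      constructor
      · simp [Prod.smul_mk, smul_eq_mul]; ring
      · simp [Prod.smul_mk, smul_eq_mul]; linear_combination -hxy
    rw [h]; exact combo_mem _ _ _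
  · show zb • (Submodule.Quotient.mk (yb, (0 : Osing)) : T1) ∈ SS
    rw [← Submodule.Quotient.mk_smul]
    refine mk_mem_SS_of _ 0 (by rw [Submodule.Quotient.mk_zero]; exact SS.zero_mem) ?_
    have h : zb • ((yb, (0 : Osing)) : Osing × Osing) - 0
        = (0 : Osing) • ((zb, yb) : Osing × Osing) + yb • ((zb, xb) : Osing × Osing)
          + (0 : Osing) • ((3 * zb ^ 2 + xb + yb, 0) : Osing × Osing) := by
      rw [Prod.ext_iff]
      constructor
      · simp [Prod.smul_mk, smul_eq_mul]; ring
      · simp [Prod.smul_mk, smul_eq_mul]; linear_combination -hxy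
    rw [h]; exact combo_mem _ _ _
  · show zb • (Submodule.Quotient.mk (zb, (0 : Osing)) : T1) ∈ SS
    rw [← Submodule.Quotient.mk_smul]
    apply mem_of_three_smul
    rw [hsm3]
    refine mk_mem_SS_of _ (-((xb, 0) + (yb, 0)))
      (by rw [Submodule.Quotient.mk_neg, Submodule.Quotient.mk_add]
          exact SS.neg_mem (SS.add_mem (memS 1) (memS 2))) ?_
    have h : (3 : Osing) • (zb • ((zb, (0 : Osing)) : Osing × Osing)) - (-((xb, 0) + (yb, 0)))
        = (0 : Osing) • ((zb, yb) : Osing × Osing) + (0 : Osing) • ((zb, xb) : Osing × Osing)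
          + (1 : Osing) • ((3 * zb ^ 2 + xb + yb, 0) : Osing × Osing) := by
      rw [Prod.ext_iff]
      constructor <;> simp [Prod.smul_mk, smul_eq_mul] <;> ring
    rw [h]; exact combo_mem _ _ _
  · show zb • (Submodule.Quotient.mk ((0 : Osing), (1 : Osing)) : T1) ∈ SS
    rw [← Submodule.Quotient.mk_smul, Prod.smul_mk, smul_eq_mul, smul_eq_mul, mul_one, mul_zero]
    exact memS 5
  · show zb • (Submodule.Quotient.mk ((0 : Osing), zb) : T1) ∈ SS
    rw [← Submodule.Quotient.mk_smul, Prod.smul_mk, smul_eq_mul, smul_eq_mul, mul_zero,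
      ← pow_two]
    exact memS 6
  · show zb • (Submodule.Quotient.mk ((0 : Osing), zb ^ 2) : T1) ∈ SS
    rw [← Submodule.Quotient.mk_smul]
    apply mem_of_three_smul
    rw [hsm3]
    refine mk_mem_SS_of _ (-((xb, 0) + (yb, 0)) - ((xb, 0) + (yb, 0)))
      (by rw [Submodule.Quotient.mk_sub, Submodule.Quotient.mk_neg, Submodule.Quotient.mk_add]
          exact SS.sub_mem (SS.neg_mem (SS.add_mem (memS 1) (memS 2)))
            (SS.add_mem (memS 1) (memS 2))) ?_
    have h : (3 : Osing) • (zb • (((0 : Osing), zb ^ 2) : Osing × Osing))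
          - (-((xb, 0) + (yb, 0)) - ((xb, 0) + (yb, 0)))
        = (-(3 * zb)) • ((zb, yb) : Osing × Osing) + (-(3 * zb)) • ((zb, xb) : Osing × Osing)
          + (2 : Osing) • ((3 * zb ^ 2 + xb + yb, 0) : Osing × Osing) := by
      rw [Prod.ext_iff]
      constructor
      · simp [Prod.smul_mk, smul_eq_mul]; ring
      · simp [Prod.smul_mk, smul_eq_mul]; linear_combination 3 * hz
    rw [h]; exact combo_mem _ _ _

lemma first_mem (p : MvPolynomial (Fin 3) ℂ) :
    (Submodule.Quotient.mk ((Ideal.Quotient.mk Ising p, 0) : Osing × Osing) : T1) ∈ SS := by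
  induction p using MvPolynomial.induction_on with
  | C a =>
    have hpair : ((Ideal.Quotient.mk Ising (C a), (0 : Osing)) : Osing × Osing)
        = (algebraMap ℂ Osing a) • (((1 : Osing), (0 : Osing)) : Osing × Osing) := by
      rw [Prod.ext_iff]
      refine ⟨?_, by simp⟩
      show Ideal.Quotient.mk Ising (C a) = algebraMap ℂ Osing a * 1
      rw [mul_one, show (C a : MvPolynomial (Fin 3) ℂ)
          = algebraMap ℂ (MvPolynomial (Fin 3) ℂ) a from rfl, Ideal.Quotient.mk_algebraMap]
    rw [hpair, Submodule.Quotient.mk_smul, algebraMap_smul]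
    exact SS.smul_mem a (memS 0)
  | add p q hp hq =>
    have hpair : ((Ideal.Quotient.mk Ising (p + q), (0 : Osing)) : Osing × Osing)
        = (Ideal.Quotient.mk Ising p, 0) + (Ideal.Quotient.mk Ising q, 0) := by
      rw [Prod.ext_iff]
      constructor <;> simp
    rw [hpair, Submodule.Quotient.mk_add]
    exact SS.add_mem hp hq
  | mul_X p i hp =>
    have hpair : ((Ideal.Quotient.mk Ising (p * X i), (0 : Osing)) : Osing × Osing)
        = (Ideal.Quotient.mk Ising (X i)) • ((Ideal.Quotient.mk Ising p, 0) : Osing × Osing) := by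
      rw [Prod.ext_iff]
      refine ⟨?_, by simp⟩
      show Ideal.Quotient.mk Ising (p * X i)
          = Ideal.Quotient.mk Ising (X i) * Ideal.Quotient.mk Ising p
      rw [← map_mul, mul_comm]
    rw [hpair, Submodule.Quotient.mk_smul]
    fin_cases i
    · exact SS_x _ hp
    · exact SS_y _ hp
    · exact SS_z _ hp

lemma second_mem (q : MvPolynomial (Fin 3) ℂ) :
    (Submodule.Quotient.mk (((0 : Osing), Ideal.Quotient.mk Ising q) : Osing × Osing) : T1) ∈ SS := by
  induction q using MvPolynomial.induction_on with
  | C a =>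
    have hpair : (((0 : Osing), Ideal.Quotient.mk Ising (C a)) : Osing × Osing)
        = (algebraMap ℂ Osing a) • (((0 : Osing), (1 : Osing)) : Osing × Osing) := by
      rw [Prod.ext_iff]
      refine ⟨by simp, ?_⟩
      show Ideal.Quotient.mk Ising (C a) = algebraMap ℂ Osing a * 1
      rw [mul_one, show (C a : MvPolynomial (Fin 3) ℂ)
          = algebraMap ℂ (MvPolynomial (Fin 3) ℂ) a from rfl, Ideal.Quotient.mk_algebraMap]
    rw [hpair, Submodule.Quotient.mk_smul, algebraMap_smul]
    exact SS.smul_mem a (memS 4)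
  | add p q hp hq =>
    have hpair : (((0 : Osing), Ideal.Quotient.mk Ising (p + q)) : Osing × Osing)
        = (0, Ideal.Quotient.mk Ising p) + (0, Ideal.Quotient.mk Ising q) := by
      rw [Prod.ext_iff]
      constructor <;> simp
    rw [hpair, Submodule.Quotient.mk_add]
    exact SS.add_mem hp hq
  | mul_X p i hp =>
    have hpair : (((0 : Osing), Ideal.Quotient.mk Ising (p * X i)) : Osing × Osing)
        = (Ideal.Quotient.mk Ising (X i)) • (((0 : Osing), Ideal.Quotient.mk Ising p) : Osing × Osing) := by
      rw [Prod.ext_iff]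
      refine ⟨by simp, ?_⟩
      show Ideal.Quotient.mk Ising (p * X i)
          = Ideal.Quotient.mk Ising (X i) * Ideal.Quotient.mk Ising p
      rw [← map_mul, mul_comm]
    rw [hpair, Submodule.Quotient.mk_smul]
    fin_cases i
    · exact SS_x _ hp
    · exact SS_y _ hp
    · exact SS_z _ hp

lemma SS_top : SS = ⊤ := by
  rw [eq_top_iff]
  rintro t -
  obtain ⟨w, rfl⟩ := Submodule.Quotient.mk_surjective Nrel t
  obtain ⟨p, hp⟩ := Ideal.Quotient.mk_surjective (I := Ising) w.1
  obtain ⟨q, hq⟩ := Ideal.Quotient.mk_surjective (I := Ising) w.2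
  have hw : w = (w.1, (0 : Osing)) + ((0 : Osing), w.2) := by
    rw [Prod.ext_iff]; constructor <;> simp
  rw [hw, Submodule.Quotient.mk_add]
  exact SS.add_mem (hp ▸ first_mem p) (hq ▸ second_mem q)

lemma T1_span : Submodule.span ℂ (Set.range T1basis) = ⊤ := SS_top

def T1Basis : Module.Basis (Fin 7) ℂ T1 :=
  Module.Basis.mk T1_linearIndependent (by rw [T1_span])

lemma T1_finrank : Module.finrank ℂ T1 = 7 := by
  rw [Module.finrank_eq_card_basis T1Basis, Fintype.card_fin]


/-- The classes of `f₁*, x f₁*, y f₁*, z f₁*, f₂*, z f₂*, z² f₂*` form a basis of the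
versal deformation space `T¹`; in particular `T¹` is a 7-dimensional complex vector
space. -/
theorem stmt6 :
    LinearIndependent ℂ T1basis ∧
    Submodule.span ℂ (Set.range T1basis) = ⊤ ∧
    Module.finrank ℂ T1 = 7 := by
  exact ⟨T1_linearIndependent, T1_span, T1_finrank⟩

end
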